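/- Let W be an m×n real matrix with m < n and 0 < δ < 1, and define M = -(1-δ)·Iₙ + WᵀW. Then the Frobenius distance from M to the PSD cone is at least sqrt(n - m)·(1-δ). -/

import Mathlib

open Matrix BigOperators Finset

noncomputable def frob {n : ℕ} (A : Matrix (Fin n) (Fin n) ℝ) : ℝ :=
  Real.sqrt (∑ i, ∑ j, (A i j)^2)

noncomputable def distPSD {n : ℕ} (M : Matrix (Fin n) (Fin n) ℝ) : ℝ :=
  sInf {d : ℝ | ∃ N : Matrix (Fin n) (Fin n) ℝ, N.PosSemidef ∧ d = frob (M - N)}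

def kPSD {n : ℕ} (k : ℕ) (M : Matrix (Fin n) (Fin n) ℝ) : Prop :=
  ∀ J : Finset (Fin n), J.card = k →
    (M.submatrix (fun i : {i // i ∈ J} => (i : Fin n))
      (fun i : {i // i ∈ J} => (i : Fin n))).PosSemidef

def kSparse {n : ℕ} (k : ℕ) (x : Fin n → ℝ) : Prop :=
  (Finset.univ.filter (fun i => x i ≠ 0)).card ≤ k

open RealInnerProductSpace in
private lemma inner_eq_dot' {n : ℕ} (x y : EuclideanSpace ℝ (Fin n)) : ⟪x, y⟫ = x ⬝ᵥ y := by
  simp [PiLp.inner_apply, dotProduct, RCLike.inner_apply]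
  exact Finset.sum_congr rfl fun _ _ => mul_comm _ _

open RealInnerProductSpace in
private lemma key_aux {m n : ℕ} (r : ℕ) (δ : ℝ) (hδ : 0 < 1 - δ)
    (W : Matrix (Fin m) (Fin n) ℝ)
    (v : Fin r → EuclideanSpace ℝ (Fin n)) (hvon : Orthonormal ℝ v)
    (hvK : ∀ j, W *ᵥ (v j) = 0)
    (N : Matrix (Fin n) (Fin n) ℝ) (hN : N.PosSemidef) :
    Real.sqrt r * (1 - δ)
      ≤ frob (-((1 - δ) • (1 : Matrix (Fin n) (Fin n) ℝ)) + Wᵀ * W - N) := by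
  set A : Matrix (Fin n) (Fin n) ℝ := -((1 - δ) • 1) + Wᵀ * W - N with hA
  let vv : Fin r → (Fin n → ℝ) := fun j => show Fin n → ℝ from v j
  have hnorm : ∀ j, ⟪v j, v j⟫ = 1 := fun j => by
    have := orthonormal_iff_ite.mp hvon j j; simpa using this
  have hdot1 : ∀ j, vv j ⬝ᵥ vv j = 1 := fun j => by
    rw [show vv j ⬝ᵥ vv j = ⟪v j, v j⟫ from (inner_eq_dot' _ _), hnorm]
  have ht : ∀ j, (vv j) ⬝ᵥ (A *ᵥ (vv j)) ≤ -(1 - δ) := by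
    intro j
    have hM : A *ᵥ (vv j) = (-(1 - δ)) • (vv j) - N *ᵥ (vv j) := by
      rw [hA, Matrix.sub_mulVec, Matrix.add_mulVec, Matrix.neg_mulVec, Matrix.smul_mulVec,
        Matrix.one_mulVec, ← Matrix.mulVec_mulVec, hvK, Matrix.mulVec_zero]
      funext i; simp [Pi.sub_apply, Pi.smul_apply, Pi.neg_apply]; ring
    rw [hM]
    have h2 : 0 ≤ (vv j) ⬝ᵥ (N *ᵥ (vv j)) := by
      have := hN.dotProduct_mulVec_nonneg (vv j); simpa using this
    rw [dotProduct_sub, dotProduct_smul]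
    rw [hdot1]
    simp only [smul_eq_mul, mul_one]
    linarith
  have hsq : ∀ j, (1 - δ)^2 ≤ ((vv j) ⬝ᵥ (A *ᵥ (vv j)))^2 := by
    intro j
    nlinarith [ht j]
  have hcs : ∀ j, ((vv j) ⬝ᵥ (A *ᵥ (vv j)))^2 ≤ ∑ i, (A *ᵥ (vv j)) i ^ 2 := by
    intro j
    set w : EuclideanSpace ℝ (Fin n) := (WithLp.equiv 2 (Fin n → ℝ)).symm (A *ᵥ (vv j)) with hw
    have h1 : (vv j) ⬝ᵥ (A *ᵥ (vv j)) = ⟪v j, w⟫ := (inner_eq_dot' (v j) w).symm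
    have h2 := real_inner_mul_inner_self_le (v j) w
    rw [hnorm] at h2
    have h3 : ⟪w, w⟫ = ∑ i, (A *ᵥ (vv j)) i ^ 2 := by
      rw [inner_eq_dot']; simp only [dotProduct, sq]; rfl
    rw [h1, sq]
    calc ⟪v j, w⟫ * ⟪v j, w⟫ ≤ 1 * ⟪w, w⟫ := h2
      _ = ∑ i, (A *ᵥ (vv j)) i ^ 2 := by rw [one_mul, h3]
  have hbessel : ∑ j, ∑ i, (A *ᵥ (vv j)) i ^ 2 ≤ ∑ i, ∑ k, (A i k)^2 := by
    rw [Finset.sum_comm]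
    apply Finset.sum_le_sum
    intro i _
    set x : EuclideanSpace ℝ (Fin n) := (WithLp.equiv 2 (Fin n → ℝ)).symm (fun k => A i k) with hx
    have hb := hvon.sum_inner_products_le (s := Finset.univ) x
    have hx2 : ‖x‖^2 = ∑ k, (A i k)^2 := by
      rw [← real_inner_self_eq_norm_sq, inner_eq_dot']
      simp only [dotProduct, sq]; rfl
    calc ∑ j, (A *ᵥ (vv j)) i ^ 2 = ∑ j, ‖⟪v j, x⟫‖^2 := by
          apply Finset.sum_congr rfl
          intro j _
          rw [inner_eq_dot', Real.norm_eq_abs, sq_abs]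
          congr 1
          simp only [dotProduct, Matrix.mulVec]
          exact Finset.sum_congr rfl fun k _ => mul_comm _ _
      _ ≤ ‖x‖^2 := hb
      _ = ∑ k, (A i k)^2 := hx2
  have hmain : (r : ℝ) * (1 - δ)^2 ≤ ∑ i, ∑ k, (A i k)^2 := by
    calc (r : ℝ) * (1 - δ)^2 = ∑ _j : Fin r, (1 - δ)^2 := by simp [mul_comm]
      _ ≤ ∑ j, ((vv j) ⬝ᵥ (A *ᵥ (vv j)))^2 := Finset.sum_le_sum fun j _ => hsq j
      _ ≤ ∑ j, ∑ i, (A *ᵥ (vv j)) i ^ 2 := Finset.sum_le_sum fun j _ => hcs j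
      _ ≤ _ := hbessel
  have hfinal : Real.sqrt ((r : ℝ) * (1 - δ)^2) ≤ frob A := Real.sqrt_le_sqrt hmain
  calc Real.sqrt r * (1 - δ) = Real.sqrt ((r : ℝ) * (1 - δ)^2) := by
        rw [Real.sqrt_mul (Nat.cast_nonneg r), Real.sqrt_sq hδ.le]
    _ ≤ frob A := hfinal

theorem stmt14 (m n : ℕ) (hmn : m < n) (δ : ℝ) (hδ0 : 0 < δ) (hδ1 : δ < 1)
    (W : Matrix (Fin m) (Fin n) ℝ) :
    Real.sqrt ((n : ℝ) - m) * (1 - δ)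
      ≤ distPSD (-((1 - δ) • (1 : Matrix (Fin n) (Fin n) ℝ)) + Wᵀ * W) := by
  classical
  have hδ : (0:ℝ) < 1 - δ := by linarith
  -- orthonormal kernel family
  obtain ⟨v, hvon, hvK⟩ : ∃ v : Fin (n - m) → EuclideanSpace ℝ (Fin n),
      Orthonormal ℝ v ∧ ∀ j, W *ᵥ (v j) = 0 := by
    let f : EuclideanSpace ℝ (Fin n) →ₗ[ℝ] (Fin m → ℝ) :=
      W.mulVecLin ∘ₗ (WithLp.linearEquiv 2 ℝ (Fin n → ℝ)).toLinearMap
    have hK : n - m ≤ Module.finrank ℝ (LinearMap.ker f) := by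
      have h1 := LinearMap.finrank_range_add_finrank_ker f
      have h2 : Module.finrank ℝ (LinearMap.range f) ≤ m :=
        (Submodule.finrank_le _).trans (by simp [Module.finrank_pi])
      rw [finrank_euclideanSpace_fin] at h1
      omega
    let b := stdOrthonormalBasis ℝ (LinearMap.ker f)
    refine ⟨fun j => (b (Fin.castLE hK j) : EuclideanSpace ℝ (Fin n)), ?_,
      fun j => (b (Fin.castLE hK j)).2⟩
    rw [orthonormal_iff_ite]
    intro i j
    have := orthonormal_iff_ite.mp b.orthonormal (Fin.castLE hK i) (Fin.castLE hK j)
    rw [Submodule.coe_inner] at this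
    simpa [Fin.castLE_inj] using this
  have hcast : Real.sqrt ((n : ℝ) - m) = Real.sqrt ((n - m : ℕ) : ℝ) := by
    rw [Nat.cast_sub hmn.le]
  rw [hcast, distPSD]
  apply le_csInf
  · exact ⟨frob (-((1 - δ) • (1 : Matrix (Fin n) (Fin n) ℝ)) + Wᵀ * W - 0), 0,
      Matrix.PosSemidef.zero, rfl⟩
  · rintro d ⟨N, hN, rfl⟩
    exact key_aux (n - m) δ hδ W v hvon hvK N hN
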